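/- Let R be an algebraically closed field. Then for every finite simple graph G, mr_R(G) ≤ γ_R(G). -/

import Mathlib

open scoped Classical

variable {V : Type*}

/-- The generalized Laplacian matrix `L(G, X_G)` of a simple graph `G`, with entries in the
polynomial ring `R[X_G]`: the `(u,v)` entry is the indeterminate `x_u` if `u = v`,
`-1` if `u` and `v` are adjacent, and `0` otherwise. -/
noncomputable def genLaplacian (R : Type*) [CommRing R] (G : SimpleGraph V) :
    Matrix V V (MvPolynomial V R) := fun u v =>
  if u = v then MvPolynomial.X u else if G.Adj u v then -1 else 0

/-- The ideal generated by the determinants of all `i × i` submatrices of a square matrix. -/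
noncomputable def minorsIdeal {S : Type*} [CommRing S] (M : Matrix V V S) (i : ℕ) : Ideal S :=
  Ideal.span { d : S | ∃ f g : Fin i → V, Function.Injective f ∧ Function.Injective g ∧
    d = (M.submatrix f g).det }

/-- The `i`-th critical ideal `I_i(G, X_G) ⊆ R[X_G]` of a simple graph `G`. -/
noncomputable def criticalIdeal (R : Type*) [CommRing R] (G : SimpleGraph V) (i : ℕ) :
    Ideal (MvPolynomial V R) :=
  minorsIdeal (genLaplacian R G) i

/-- The algebraic co-rank `γ_R(G)`: the largest `i` (with `0 ≤ i ≤ |V(G)|`) such that the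
`i`-th critical ideal of `G` over `R` is trivial (i.e. the whole ring). -/
noncomputable def algCoRank (R : Type*) [CommRing R] [Fintype V] (G : SimpleGraph V) : ℕ :=
  sSup {i | i ≤ Fintype.card V ∧ criticalIdeal R G i = ⊤}

/-- The rank of a square matrix over a commutative ring: the largest `k` such that some
`k × k` minor is nonzero and is not a zero divisor. -/
noncomputable def ringRank {R : Type*} [CommRing R] (M : Matrix V V R) : ℕ :=
  sSup {k | ∃ f g : Fin k → V, Function.Injective f ∧ Function.Injective g ∧
    (M.submatrix f g).det ≠ 0 ∧ (M.submatrix f g).det ∈ nonZeroDivisors R}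

/-- `A ∈ S_R(G)`: `A` is a symmetric matrix over `R`, indexed by the vertices of `G`, whose
off-diagonal `(u,v)` entry is nonzero iff `u` and `v` are adjacent (the diagonal is free). -/
def IsGraphMatrix {R : Type*} [CommRing R] (G : SimpleGraph V) (A : Matrix V V R) : Prop :=
  A.IsSymm ∧ ∀ u v : V, u ≠ v → (A u v ≠ 0 ↔ G.Adj u v)

/-- The minimum rank `mr_R(G)`: the smallest rank among matrices in `S_R(G)`. -/
noncomputable def minRank (R : Type*) [CommRing R] (G : SimpleGraph V) : ℕ :=
  sInf {k | ∃ A : Matrix V V R, IsGraphMatrix G A ∧ ringRank A = k}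

/-- The generalized Laplacian of `G` evaluated at a vector `d`: `L(G, d)` has `d u` on the
diagonal, `-1` at adjacent off-diagonal pairs and `0` elsewhere. -/
noncomputable def evalLaplacian {R : Type*} [CommRing R] (G : SimpleGraph V) (d : V → R) :
    Matrix V V R := fun u v =>
  if u = v then d u else if G.Adj u v then -1 else 0

/-- The critical minimum rank `mr^cr_R(G)`: the minimum of `rank (L(G,d))` over `d ∈ R^{V(G)}`. -/
noncomputable def crMinRank (R : Type*) [CommRing R] (G : SimpleGraph V) : ℕ :=
  sInf {k | ∃ d : V → R, ringRank (evalLaplacian G d) = k}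

/-- `a, b : Fin k → V` form a chronological list of forces for the zero forcing game on `G`
started with the vertices of `B` blue: at step `t` the force `a t → b t` is performed, which
requires that `a t` is blue, that `b t` is a white neighbor of `a t`, and that every white
neighbor of `a t` equals `b t`. -/
def IsChronList (G : SimpleGraph V) (B : Set V) {k : ℕ} (a b : Fin k → V) : Prop :=
  (∀ t, G.Adj (a t) (b t)) ∧
  (∀ t, a t ∈ B ∨ ∃ s, s < t ∧ b s = a t) ∧
  (∀ t, b t ∉ B ∧ ∀ s, s < t → b s ≠ b t) ∧
  (∀ t z, G.Adj (a t) z → z ∉ B → (∀ s, s < t → b s ≠ z) → z = b t)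

/-- `B` is a zero forcing set of `G`: starting with exactly `B` blue, there is a sequence of
forces turning every vertex of `G` blue. -/
def IsZeroForcingSet (G : SimpleGraph V) (B : Set V) : Prop :=
  ∃ (k : ℕ) (a b : Fin k → V), IsChronList G B a b ∧ ∀ v : V, v ∈ B ∨ ∃ t, b t = v

/-- The zero forcing number `Z(G)`: the minimum cardinality of a zero forcing set of `G`. -/
noncomputable def zeroForcingNumber [Fintype V] (G : SimpleGraph V) : ℕ :=
  sInf {m | ∃ B : Finset V, B.card = m ∧ IsZeroForcingSet G ↑B}

/-- `mz(G) = |V(G)| - Z(G)`. -/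
noncomputable def mz [Fintype V] (G : SimpleGraph V) : ℕ :=
  Fintype.card V - zeroForcingNumber G

section Aux

open MvPolynomial

lemma aux_exists_eval_zero {R : Type*} [Field R] [IsAlgClosed R] {σ : Type*} [Finite σ]
    (I : Ideal (MvPolynomial σ R)) (h : I ≠ ⊤) :
    ∃ d : σ → R, ∀ p ∈ I, MvPolynomial.eval d p = 0 := by
  obtain ⟨m, hm, hIm⟩ := Ideal.exists_le_maximal I h
  obtain ⟨x, hx⟩ := (MvPolynomial.isMaximal_iff_eq_vanishingIdeal_singleton).mp hm
  refine ⟨x, fun p hp => ?_⟩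
  have hpm := hIm hp
  rw [hx] at hpm
  exact (MvPolynomial.mem_vanishingIdeal_singleton_iff x p).mp hpm

lemma aux_isGraphMatrix {R : Type*} [Field R] (G : SimpleGraph V) (d : V → R) :
    IsGraphMatrix G (evalLaplacian G d) := by
  constructor
  · ext u v
    simp only [Matrix.transpose_apply, evalLaplacian]
    by_cases h : u = v
    · subst h; simp
    · rw [if_neg h, if_neg (Ne.symm h)]
      by_cases ha : G.Adj u v
      · rw [if_pos ha, if_pos ha.symm]
      · rw [if_neg ha, if_neg (fun h' => ha h'.symm)]
  · intro u v huv
    simp only [evalLaplacian, if_neg huv]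
    by_cases ha : G.Adj u v
    · simp [ha]
    · simp [ha]

lemma aux_ringRank_le_card {R : Type*} [CommRing R] [Fintype V] (M : Matrix V V R) :
    ringRank M ≤ Fintype.card V := by
  rcases Set.eq_empty_or_nonempty {k | ∃ f g : Fin k → V, Function.Injective f ∧
      Function.Injective g ∧ (M.submatrix f g).det ≠ 0 ∧
      (M.submatrix f g).det ∈ nonZeroDivisors R} with he | hne
  · rw [ringRank, he, csSup_empty]; exact bot_le
  · refine csSup_le hne ?_
    rintro k ⟨f, g, hf, hg, -, -⟩
    simpa using Fintype.card_le_of_injective f hf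

lemma aux_minors_zero {R : Type*} [CommRing R] (M : Matrix V V R) (m : ℕ)
    (h : ∀ f g : Fin m → V, Function.Injective f → Function.Injective g →
      (M.submatrix f g).det = 0) :
    ∀ k, m ≤ k → ∀ f g : Fin k → V, Function.Injective f → Function.Injective g →
      (M.submatrix f g).det = 0 := by
  intro k
  induction k with
  | zero =>
    intro hk f g hf hg
    have hm0 : m = 0 := Nat.le_zero.mp hk
    subst hm0
    exact h f g hf hg
  | succ k ih =>
    intro hk f g hf hg
    rcases Nat.eq_or_lt_of_le hk with heq | hlt
    · subst heq; exact h f g hf hg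
    · have hmk : m ≤ k := Nat.lt_succ_iff.mp hlt
      rw [Matrix.det_succ_row_zero]
      refine Finset.sum_eq_zero fun j _ => ?_
      have : ((M.submatrix f g).submatrix Fin.succ j.succAbove).det = 0 := by
        rw [Matrix.submatrix_submatrix]
        exact ih hmk _ _ (hf.comp (Fin.succ_injective k)) (hg.comp (Fin.succAbove_right_injective))
      rw [this, mul_zero]

end Aux

/-- If `R` is an algebraically closed field, then for every finite simple
graph `G` we have `mr_R(G) ≤ γ_R(G)`. -/
theorem minRank_le_algCoRank_of_isAlgClosed (R : Type*) [Field R] [IsAlgClosed R]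
    {V : Type*} [Fintype V] (G : SimpleGraph V) :
    minRank R G ≤ algCoRank R G := by
  classical
  set S : Set ℕ := {i | i ≤ Fintype.card V ∧ criticalIdeal R G i = ⊤} with hS
  have hbdd : BddAbove S := ⟨Fintype.card V, fun i hi => hi.1⟩
  have hnot : algCoRank R G + 1 ∉ S := by
    intro h
    have := le_csSup hbdd h
    rw [algCoRank, ← hS] at this
    omega
  have hmem : ∀ d : V → R, ringRank (evalLaplacian G d) ∈
      {k | ∃ A : Matrix V V R, IsGraphMatrix G A ∧ ringRank A = k} :=
    fun d => ⟨evalLaplacian G d, aux_isGraphMatrix G d, rfl⟩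
  rcases Nat.lt_or_ge (Fintype.card V) (algCoRank R G + 1) with hcase | hcase
  · calc minRank R G ≤ ringRank (evalLaplacian G (0 : V → R)) := Nat.sInf_le (hmem 0)
      _ ≤ Fintype.card V := aux_ringRank_le_card _
      _ ≤ algCoRank R G := by omega
  · have hne : criticalIdeal R G (algCoRank R G + 1) ≠ ⊤ := fun h => hnot ⟨hcase, h⟩
    obtain ⟨d, hd⟩ := aux_exists_eval_zero _ hne
    have hmap : (genLaplacian R G).map (MvPolynomial.eval d) = evalLaplacian G d := by
      ext u v
      simp only [Matrix.map_apply, genLaplacian, evalLaplacian]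
      by_cases h : u = v
      · simp [h]
      · rw [if_neg h, if_neg h]
        by_cases ha : G.Adj u v <;> simp [ha]
    have hminor : ∀ f g : Fin (algCoRank R G + 1) → V, Function.Injective f →
        Function.Injective g → ((evalLaplacian G d).submatrix f g).det = 0 := by
      intro f g hf hg
      have hgen : ((genLaplacian R G).submatrix f g).det ∈
          criticalIdeal R G (algCoRank R G + 1) :=
        Ideal.subset_span ⟨f, g, hf, hg, rfl⟩
      have := hd _ hgen
      rwa [RingHom.map_det, RingHom.mapMatrix_apply, ← Matrix.submatrix_map, hmap] at this
    have hrank : ringRank (evalLaplacian G d) ≤ algCoRank R G := by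
      rcases Set.eq_empty_or_nonempty {k | ∃ f g : Fin k → V, Function.Injective f ∧
          Function.Injective g ∧ ((evalLaplacian G d).submatrix f g).det ≠ 0 ∧
          ((evalLaplacian G d).submatrix f g).det ∈ nonZeroDivisors R} with he | hne'
      · rw [ringRank, he, csSup_empty]; exact bot_le
      · refine csSup_le hne' ?_
        rintro k ⟨f, g, hf, hg, hdet, -⟩
        by_contra hk
        push_neg at hk
        exact hdet (aux_minors_zero (evalLaplacian G d) (algCoRank R G + 1) hminor k hk f g hf hg)
    exact le_trans (Nat.sInf_le (hmem d)) hrank
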